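/- Let m ∈ ℤ and let c : ℤ × ℤ → ℚ be a function satisfying (i) c(n,d) = c(−n,d) for all n,d ∈ ℤ, and (ii) c(n,d) = c(−n−2m, d+n+m) for all n,d ∈ ℤ. Then for every λ ∈ ℤ and all n,d ∈ ℤ one has c(n,d) = c(n+2mλ, d+λn+mλ²). -/

import Mathlib

/-- If `c : ℤ × ℤ → ℚ` satisfies `c (n, d) = c (-n, d)` and
`c (n, d) = c (-n - 2*m, d + n + m)` for all `n d`, then for every `λ n d` one has
`c (n, d) = c (n + 2*m*λ, d + λ*n + m*λ^2)`. -/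
theorem elliptic_transformation_coefficients
    (m : ℤ) (c : ℤ × ℤ → ℚ)
    (h1 : ∀ n d : ℤ, c (n, d) = c (-n, d))
    (h2 : ∀ n d : ℤ, c (n, d) = c (-n - 2 * m, d + n + m)) :
    ∀ lam n d : ℤ, c (n, d) = c (n + 2 * m * lam, d + lam * n + m * lam ^ 2) := by
  have up : ∀ n d : ℤ, c (n, d) = c (n + 2 * m, d + n + m) := by
    intro n d
    rw [h2 n d, h1]
    ring_nf
  have down : ∀ n d : ℤ, c (n, d) = c (n - 2 * m, d - n + m) := by
    intro n d
    rw [h1 n d, h2 (-n) d]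
    ring_nf
  intro lam
  induction lam using Int.induction_on with
  | zero => intro n d; ring_nf
  | succ k ih =>
    intro n d
    rw [ih n d, up (n + 2 * m * k) (d + k * n + m * k ^ 2)]
    ring_nf
  | pred k ih =>
    intro n d
    rw [ih n d, down (n + 2 * m * (-k)) (d + (-k) * n + m * (-k) ^ 2)]
    ring_nf
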